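/- arXiv:1602.05423 — 2 statements merged into one kernel-verified Lean document; each statement's English description precedes it below -/
import Mathlib

section
/- Let K = (K^{μν}) be an N×N matrix of differential operators with ε-graded coefficients as above, and write K = Σ_{i≥0} K_i ∂_x^i where the K_i are matrices of differential polynomials. Suppose the constant term vanishes, K_0 = 0. Let u^α ↦ ũ^α(u) = u^α + ∂_x r^α be a Miura transformation with r^α ∈ Â_N^{[−1]}. Then the transformed operator K_ũ, defined by (K_ũ)^{αβ} = Σ_{p,q≥0} (∂ũ^α(u)/∂u^μ_p) ∂_x^p ∘ K^{μν} ∘ (−∂_x)^q ∘ (∂ũ^β(u)/∂u^ν_q), also has vanishing constant term: (K_ũ)_0 = 0. -/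
/-!
Common formal framework for the theory of differential polynomials, local
functionals and tau-structures, following Buryak–Dubrovin–Guéré–Rossi.

Variables of the algebra of differential polynomials: `Sum.inl (α, i)` stands
for `u^α_i` (with `u^α = u^α_0`) and `Sum.inr ()` stands for `ε`.  The paper's
index `1` (the unit direction) corresponds to `(0 : Fin N)` here.
-/

/-- The variables of the algebra of differential polynomials. -/
abbrev DVar (N : ℕ) : Type := (Fin N × ℕ) ⊕ Unit

/-- The ring `Â_N` of (extended) differential polynomials, realized inside the
ring of formal power series in the variables `u^α_i` and `ε`. -/
abbrev DP (N : ℕ) : Type := MvPowerSeries (DVar N) ℂ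

namespace DP

variable {N : ℕ}

/-- Coefficient of a monomial. -/
noncomputable def co (f : DP N) (m : DVar N →₀ ℕ) : ℂ :=
  MvPowerSeries.coeff m f

/-- Build a power series from its coefficients. -/
def ofCo (F : (DVar N →₀ ℕ) → ℂ) : DP N := F

/-- The variable `u^α_i`. -/
noncomputable def uv (α : Fin N) (i : ℕ) : DP N :=
  MvPowerSeries.X (Sum.inl (α, i))

/-- The variable `ε`. -/
noncomputable def eps : DP N := MvPowerSeries.X (Sum.inr ())

/-- The partial derivative `∂/∂v` with respect to one of the variables. -/
noncomputable def pd (v : DVar N) (f : DP N) : DP N :=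
  ofCo fun m => ((m v : ℂ) + 1) * co f (m + Finsupp.single v 1)

/-- The spatial derivative `∂_x = Σ_{α,i} u^α_{i+1} ∂/∂u^α_i`. -/
noncomputable def dx (f : DP N) : DP N :=
  ofCo fun m =>
    ∑ v ∈ m.support,
      (match v with
        | Sum.inl (α, i + 1) =>
            co (pd (Sum.inl (α, i)) f) (m - Finsupp.single (Sum.inl (α, i + 1)) 1)
        | _ => (0 : ℂ))

/-- The variational derivative `δ/δu^μ = Σ_{i≥0} (−∂_x)^i ∘ ∂/∂u^μ_i`. -/
noncomputable def vd (μ : Fin N) (f : DP N) : DP N :=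
  ofCo fun m => ∑ᶠ i : ℕ, ((-1 : ℂ) ^ i) * co (dx^[i] (pd (Sum.inl (μ, i)) f)) m

/-- The weighted degree of a monomial: `deg u^α_i = i`, `deg ε = −1`. -/
noncomputable def wdeg (m : DVar N →₀ ℕ) : ℤ :=
  ∑ v ∈ m.support,
    (match v with
      | Sum.inl (_, i) => (i : ℤ)
      | Sum.inr _ => (-1 : ℤ)) * (m v : ℤ)

/-- Degree-`k` homogeneity (membership in `Â_N^{[k]}`). -/
def IsHomog (k : ℤ) (f : DP N) : Prop :=
  ∀ m, co f m ≠ 0 → wdeg m = k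

/-- Being a constant, i.e. an element of `ℂ[[ε]]`. -/
def IsConst (f : DP N) : Prop :=
  ∀ m, co f m ≠ 0 → ∀ v ∈ m.support, v = Sum.inr ()

/-- Vanishing of the evaluation at `u^*_* = 0`. -/
def VanishAtU0 (f : DP N) : Prop :=
  ∀ k : ℕ, co f (Finsupp.single (Sum.inr ()) k) = 0

/-- Being a genuine differential polynomial: in each ε-degree at most `e`,
polynomiality (bounded degree, boundedly many variables) in the jet
variables `u^α_i`, `i ≥ 1`. -/
def IsDiffPoly (f : DP N) : Prop :=
  ∀ e : ℕ, ∃ D : ℕ, ∀ m, co f m ≠ 0 → m (Sum.inr ()) ≤ e →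
    ((∑ v ∈ m.support,
        (match v with
          | Sum.inl (_, _ + 1) => m v
          | _ => 0)) ≤ D) ∧
      ∀ (α : Fin N) (i : ℕ), D < i → m (Sum.inl (α, i)) = 0

/-- The submodule of constants `ℂ[[ε]] ⊆ Â_N`. -/
noncomputable def constSub (N : ℕ) : Submodule ℂ (DP N) where
  carrier := {f | IsConst f}
  add_mem' := by
    intro f g hf hg m hm
    have hco : co (f + g) m = co f m + co g m := map_add _ _ _
    by_cases h1 : co f m = 0
    · have h2 : co g m ≠ 0 := by
        intro h2; exact hm (by rw [hco, h1, h2, add_zero])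
      exact hg m h2
    · exact hf m h1
  zero_mem' := by
    intro m hm
    exact (hm (map_zero (MvPowerSeries.coeff (R := ℂ) m))).elim
  smul_mem' := by
    intro c f hf m hm
    have hne : co f m ≠ 0 := by
      intro h
      apply hm
      have hsm : co (c • f) m = c * co f m := by
        simp [co]
      rw [hsm, h, mul_zero]
    exact hf m hne

/-- The submodule `ℂ[[ε]] + ∂_x(Â_N)` by which one quotients to get local
functionals. -/
noncomputable def lfSub (N : ℕ) : Submodule ℂ (DP N) :=
  constSub N ⊔ Submodule.span ℂ (Set.range (dx : DP N → DP N))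

/-- The space `Λ̂_N` of local functionals. -/
abbrev LF (N : ℕ) := DP N ⧸ lfSub N

/-- The projection `f ↦ ∫ f dx`. -/
noncomputable def intg : DP N →ₗ[ℂ] LF N := (lfSub N).mkQ

/-- A choice of density for a local functional. -/
noncomputable def rep (h : LF N) : DP N :=
  (Submodule.Quotient.mk_surjective (lfSub N) h).choose

/-- The variational derivative `δ/δu^μ` of a local functional. -/
noncomputable def vdQ (μ : Fin N) (h : LF N) : DP N := vd μ (rep h)

/-- The partial derivative `∂/∂v` of a local functional. -/
noncomputable def pdQ (v : DVar N) (h : LF N) : LF N := intg (pd v (rep h))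

/-- The degree-`k` local functionals `Λ̂_N^{[k]}`. -/
noncomputable def LFHomog (N : ℕ) (k : ℤ) : Set (LF N) :=
  intg '' {f : DP N | IsHomog k f ∧ IsDiffPoly f}

/-- The operator `K = η ∂_x` applied to a tuple of differential polynomials. -/
noncomputable def etaAp (η : Matrix (Fin N) (Fin N) ℂ) (α : Fin N)
    (g : Fin N → DP N) : DP N :=
  ∑ ν : Fin N, η α ν • dx (g ν)

/-- The bracket `{f̄, ḡ}_{η∂_x}` of local functionals. -/
noncomputable def lfbEta (η : Matrix (Fin N) (Fin N) ℂ) (f g : LF N) : LF N :=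
  intg (∑ μ : Fin N, vdQ μ f * etaAp η μ fun ν => vdQ ν g)

/-- The bracket `{f, h̄}_{η∂_x}` of a differential polynomial with a local
functional. -/
noncomputable def pbEta (η : Matrix (Fin N) (Fin N) ℂ) (f : DP N) (h : LF N) : DP N :=
  ofCo fun m => ∑ γ : Fin N, ∑ᶠ n : ℕ,
    co (pd (Sum.inl (γ, n)) f * dx^[n] (etaAp η γ fun μ => vdQ μ h)) m

/-- A general operator `K^{γν} = Σ_j K^{γν}_j ∂_x^j` applied to a tuple of
differential polynomials. -/
noncomputable def Kap (K : Fin N → Fin N → ℕ → DP N) (γ : Fin N)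
    (g : Fin N → DP N) : DP N :=
  ∑ ν : Fin N, ofCo fun m => ∑ᶠ j : ℕ, co (K γ ν j * dx^[j] (g ν)) m

/-- The bracket `{f̄, ḡ}_K` of local functionals. -/
noncomputable def lfbK (K : Fin N → Fin N → ℕ → DP N) (f g : LF N) : LF N :=
  intg (∑ μ : Fin N, vdQ μ f * Kap K μ fun ν => vdQ ν g)

/-- The bracket `{f, h̄}_K` of a differential polynomial with a local
functional. -/
noncomputable def pbK (K : Fin N → Fin N → ℕ → DP N) (f : DP N) (h : LF N) : DP N :=
  ofCo fun m => ∑ γ : Fin N, ∑ᶠ n : ℕ,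
    co (pd (Sum.inl (γ, n)) f * dx^[n] (Kap K γ fun μ => vdQ μ h)) m

/-- Being a hamiltonian operator. -/
structure IsHamOp (K : Fin N → Fin N → ℕ → DP N) : Prop where
  finite : ∀ γ ν, ∃ J : ℕ, ∀ j, J ≤ j → K γ ν j = 0
  deg : ∀ (γ ν : Fin N) (j : ℕ), IsHomog (1 - (j : ℤ)) (K γ ν j)
  poly : ∀ γ ν j, IsDiffPoly (K γ ν j)
  antisym : ∀ f g : LF N, lfbK K f g = -lfbK K g f
  jacobi : ∀ f g h : LF N,
    lfbK K (lfbK K f g) h + lfbK K (lfbK K g h) f + lfbK K (lfbK K h f) g = 0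

/-- A hamiltonian hierarchy: a hamiltonian operator together with pairwise
commuting Hamiltonians `h̄_{β,q} ∈ Λ̂^{[0]}_N` such that `h̄_{1,0}` generates the
spatial translations. -/
structure IsHierarchy [NeZero N] (K : Fin N → Fin N → ℕ → DP N)
    (H : Fin N → ℕ → LF N) : Prop where
  ham : IsHamOp K
  mem : ∀ β q, H β q ∈ LFHomog N 0
  comm : ∀ β q γ p, lfbK K (H β q) (H γ p) = 0
  transl : ∀ α, Kap K α (fun μ => vdQ μ (H 0 0)) = uv α 1

/-- A tau-structure for a hamiltonian hierarchy.  Here `h β q` denotes the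
tau-symmetric density `h_{β,q-1}` (an index shift by one). -/
structure IsTauStructure [NeZero N] (K : Fin N → Fin N → ℕ → DP N)
    (H : Fin N → ℕ → LF N) (h : Fin N → ℕ → DP N) : Prop where
  mem : ∀ β q, IsHomog 0 (h β q) ∧ IsDiffPoly (h β q)
  casimir : ∀ β α, Kap K α (fun μ => vdQ μ (intg (h β 0))) = 0
  indep : LinearIndependent ℂ fun β : Fin N => intg (h β 0)
  nondeg : Matrix.det (Matrix.of fun α β : Fin N => co (K α β 1) 0) ≠ 0
  dens : ∀ β q, intg (h β (q + 1)) = H β q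
  tausym : ∀ α β p q, pbK K (h α p) (H β q) = pbK K (h β q) (H α p)

end DP



namespace DP

variable {N : ℕ}

/-- The operator `K^{μν} = Σ_j K^{μν}_j ∂_x^j` applied to a differential
polynomial. -/
noncomputable def KopAp (K : Fin N → Fin N → ℕ → DP N) (μ ν : Fin N)
    (g : DP N) : DP N :=
  ofCo fun m => ∑ᶠ j : ℕ, co (K μ ν j * dx^[j] g) m

/-- The transformed operator
`(K_ũ)^{αβ} = Σ_{p,q} (∂ũ^α/∂u^μ_p) ∂_x^p ∘ K^{μν} ∘ (−∂_x)^q ∘ (∂ũ^β/∂u^ν_q)`,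
as an operator acting on differential polynomials. -/
noncomputable def miuraK (K : Fin N → Fin N → ℕ → DP N) (ut : Fin N → DP N)
    (α β : Fin N) (g : DP N) : DP N :=
  ofCo fun m => ∑ᶠ p : ℕ, ∑ᶠ q : ℕ,
    co (∑ μ : Fin N, ∑ ν : Fin N,
      pd (Sum.inl (μ, p)) (ut α) *
        dx^[p] (KopAp K μ ν
          (((-1 : ℂ) ^ q) • dx^[q] (pd (Sum.inl (ν, q)) (ut β) * g)))) m

end DP


namespace DP
variable {N : ℕ}

lemma co_def (f : DP N) (m : DVar N →₀ ℕ) : co f m = f m := rfl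

lemma zero_app (m : DVar N →₀ ℕ) : (0 : DP N) m = 0 := rfl
lemma add_app (f g : DP N) (m : DVar N →₀ ℕ) : (f + g) m = f m + g m := rfl
lemma smul_app (c : ℂ) (f : DP N) (m : DVar N →₀ ℕ) : (c • f) m = c * f m := rfl
lemma sum_app {ι : Type*} (s : Finset ι) (f : ι → DP N) (m : DVar N →₀ ℕ) :
    (∑ i ∈ s, f i) m = ∑ i ∈ s, f i m := by
  classical
  induction s using Finset.cons_induction with
  | empty => rfl
  | cons a s ha ih => rw [Finset.sum_cons, Finset.sum_cons, add_app, ih]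

lemma one_app (m : DVar N →₀ ℕ) : (1 : DP N) m = if m = 0 then 1 else 0 :=
  MvPowerSeries.coeff_one m

lemma mul_app (f g : DP N) (m : DVar N →₀ ℕ) :
    (f * g) m = ∑ p ∈ Finset.HasAntidiagonal.antidiagonal m, f p.1 * g p.2 :=
  MvPowerSeries.coeff_mul m f g

lemma pd_app (v : DVar N) (f : DP N) (m : DVar N →₀ ℕ) :
    pd v f m = ((m v : ℂ) + 1) * f (m + Finsupp.single v 1) := rfl

/-- The summand in the definition of `dx`. -/
noncomputable def dxT (f : DP N) (m : DVar N →₀ ℕ) : DVar N → ℂ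
  | Sum.inl (α, i + 1) =>
      pd (Sum.inl (α, i)) f (m - Finsupp.single (Sum.inl (α, i + 1)) 1)
  | _ => 0

lemma dx_app (f : DP N) (m : DVar N →₀ ℕ) :
    dx f m = ∑ v ∈ m.support, dxT f m v := by
  refine Finset.sum_congr rfl fun v _ => ?_
  rcases v with ⟨α, _ | i⟩ | ⟨⟩ <;> rfl

end DP
namespace DP
variable {N : ℕ}

lemma pd_add (v : DVar N) (f g : DP N) : pd v (f + g) = pd v f + pd v g := by
  funext m; simp only [pd_app, add_app]; ring

lemma pd_smul (v : DVar N) (c : ℂ) (f : DP N) : pd v (c • f) = c • pd v f := by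
  funext m; simp only [pd_app, smul_app]; ring

lemma pd_zero (v : DVar N) : pd v (0 : DP N) = 0 := by
  funext m; simp only [pd_app, zero_app, mul_zero]

lemma pd_one (v : DVar N) : pd v (1 : DP N) = 0 := by
  funext m
  have h : m + Finsupp.single v 1 ≠ 0 := by
    intro h
    have := congrArg (fun n => n v) h
    simp [Finsupp.add_apply, Finsupp.single_apply] at this
  simp only [pd_app, one_app, if_neg h, mul_zero, zero_app]

lemma dxT_add (f g : DP N) (m : DVar N →₀ ℕ) (v : DVar N) :
    dxT (f + g) m v = dxT f m v + dxT g m v := by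
  rcases v with ⟨α, _ | i⟩ | ⟨⟩ <;> simp [dxT, pd_add, add_app]

lemma dxT_smul (c : ℂ) (f : DP N) (m : DVar N →₀ ℕ) (v : DVar N) :
    dxT (c • f) m v = c * dxT f m v := by
  rcases v with ⟨α, _ | i⟩ | ⟨⟩ <;> simp [dxT, pd_smul, smul_app]

lemma dxT_zero (m : DVar N →₀ ℕ) (v : DVar N) : dxT (0 : DP N) m v = 0 := by
  rcases v with ⟨α, _ | i⟩ | ⟨⟩ <;> simp [dxT, pd_zero, zero_app]

lemma dx_add (f g : DP N) : dx (f + g) = dx f + dx g := by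
  funext m
  simp only [dx_app, add_app, ← Finset.sum_add_distrib]
  exact Finset.sum_congr rfl fun v _ => dxT_add f g m v

lemma dx_smul (c : ℂ) (f : DP N) : dx (c • f) = c • dx f := by
  funext m
  simp only [dx_app, smul_app, Finset.mul_sum]
  exact Finset.sum_congr rfl fun v _ => dxT_smul c f m v

lemma dx_zero : dx (0 : DP N) = 0 := by
  funext m
  simp only [dx_app, zero_app]
  exact Finset.sum_eq_zero fun v _ => dxT_zero m v

lemma dx_one : dx (1 : DP N) = 0 := by
  funext m
  simp only [dx_app, zero_app]
  refine Finset.sum_eq_zero fun v _ => ?_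
  rcases v with ⟨α, _ | i⟩ | ⟨⟩ <;> simp [dxT, pd_one, zero_app]

lemma dx_iter_add (n : ℕ) (f g : DP N) :
    dx^[n] (f + g) = dx^[n] f + dx^[n] g := by
  induction n generalizing f g with
  | zero => rfl
  | succ n ih => simp only [Function.iterate_succ_apply, dx_add, ih]

lemma dx_iter_smul (n : ℕ) (c : ℂ) (f : DP N) :
    dx^[n] (c • f) = c • dx^[n] f := by
  induction n generalizing f with
  | zero => rfl
  | succ n ih => simp only [Function.iterate_succ_apply, dx_smul, ih]

lemma dx_iter_zero (n : ℕ) : dx^[n] (0 : DP N) = 0 := by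
  induction n with
  | zero => rfl
  | succ n ih => simp only [Function.iterate_succ_apply, dx_zero, ih]

lemma dx_iter_sum {ι : Type*} (n : ℕ) (s : Finset ι) (f : ι → DP N) :
    dx^[n] (∑ i ∈ s, f i) = ∑ i ∈ s, dx^[n] (f i) := by
  classical
  induction s using Finset.cons_induction with
  | empty => simpa using dx_iter_zero n
  | cons a s ha ih => rw [Finset.sum_cons, Finset.sum_cons, dx_iter_add, ih]

end DP
namespace DP
variable {N : ℕ}

/-- ε-count of a monomial. -/
def epsC (m : DVar N →₀ ℕ) : ℕ := m (Sum.inr ())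

/-- jet weight of a variable. -/
def jwt : DVar N → ℕ
  | Sum.inl (_, i) => i
  | Sum.inr _ => 0

/-- jet weight of a monomial. -/
def jw (m : DVar N →₀ ℕ) : ℕ := m.sum fun v n => jwt v * n

lemma epsC_add (m m' : DVar N →₀ ℕ) : epsC (m + m') = epsC m + epsC m' := by
  simp [epsC, Finsupp.add_apply]

lemma jw_add (m m' : DVar N →₀ ℕ) : jw (m + m') = jw m + jw m' := by
  simp only [jw]
  exact Finsupp.sum_add_index' (fun v => by simp) (fun v a b => by ring)

lemma epsC_single_inl (w : Fin N × ℕ) (k : ℕ) :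
    epsC (Finsupp.single (Sum.inl w : DVar N) k) = 0 := by
  simp [epsC, Finsupp.single_apply]

lemma jw_single (v : DVar N) (k : ℕ) : jw (Finsupp.single v k) = jwt v * k := by
  simp [jw, Finsupp.sum_single_index]

lemma wdeg_eq (m : DVar N →₀ ℕ) : wdeg m = (jw m : ℤ) - (epsC m : ℤ) := by
  classical
  have h1 : wdeg m = ∑ v ∈ m.support,
      ((jwt v : ℤ) * (m v : ℤ) - (if v = Sum.inr () then (m v : ℤ) else 0)) := by
    refine Finset.sum_congr rfl fun v _ => ?_
    rcases v with ⟨α, i⟩ | ⟨⟩ <;> simp [jwt] <;> ring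
  have h2 : (jw m : ℤ) = ∑ v ∈ m.support, (jwt v : ℤ) * (m v : ℤ) := by
    simp only [jw, Finsupp.sum]
    push_cast
    rfl
  have h3 : (∑ v ∈ m.support, (if v = Sum.inr () then (m v : ℤ) else 0)) = (epsC m : ℤ) := by
    rw [Finset.sum_ite_eq' m.support (Sum.inr ()) (fun v => (m v : ℤ))]
    by_cases h : (Sum.inr () : DVar N) ∈ m.support
    · simp [h, epsC]
    · rw [if_neg h]
      have : m (Sum.inr ()) = 0 := Finsupp.notMem_support_iff.mp h
      simp [epsC, this]
  rw [h1, Finset.sum_sub_distrib, h2, h3]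

lemma homog_iff (k : ℤ) (f : DP N) :
    IsHomog k f ↔ ∀ m, f m ≠ 0 → (jw m : ℤ) - (epsC m : ℤ) = k := by
  unfold IsHomog
  constructor
  · intro h m hm; rw [← wdeg_eq]; exact h m hm
  · intro h m hm; rw [wdeg_eq]; exact h m hm

lemma mul_ne (f g : DP N) (m : DVar N →₀ ℕ) (h : (f * g) m ≠ 0) :
    ∃ m1 m2, m1 + m2 = m ∧ f m1 ≠ 0 ∧ g m2 ≠ 0 := by
  classical
  rw [mul_app] at h
  obtain ⟨p, hp, hne⟩ := Finset.exists_ne_zero_of_sum_ne_zero h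
  exact ⟨p.1, p.2, Finset.HasAntidiagonal.mem_antidiagonal.mp hp,
    fun h1 => hne (by rw [h1, zero_mul]), fun h2 => hne (by rw [h2, mul_zero])⟩

lemma pd_ne (v : DVar N) (f : DP N) (m : DVar N →₀ ℕ) (h : pd v f m ≠ 0) :
    f (m + Finsupp.single v 1) ≠ 0 := by
  rw [pd_app] at h
  exact fun h2 => h (by rw [h2, mul_zero])

lemma sub_add_single (m : DVar N →₀ ℕ) (v : DVar N) (h : m v ≠ 0) :
    m - Finsupp.single v 1 + Finsupp.single v 1 = m := by
  ext w
  by_cases hw : v = w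
  · subst hw
    simp only [Finsupp.add_apply, Finsupp.tsub_apply, Finsupp.single_eq_same]
    omega
  · simp only [Finsupp.add_apply, Finsupp.tsub_apply, Finsupp.single_apply, if_neg hw]
    omega

lemma dx_ne (f : DP N) (m : DVar N →₀ ℕ) (h : dx f m ≠ 0) :
    ∃ (α : Fin N) (i : ℕ), m (Sum.inl (α, i + 1)) ≠ 0 ∧
      f (m - Finsupp.single (Sum.inl (α, i + 1)) 1 + Finsupp.single (Sum.inl (α, i)) 1) ≠ 0 := by
  rw [dx_app] at h
  obtain ⟨v, hv, hne⟩ := Finset.exists_ne_zero_of_sum_ne_zero h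
  rcases v with ⟨α, _ | i⟩ | ⟨⟩
  · exact absurd rfl hne
  · exact ⟨α, i, Finsupp.mem_support_iff.mp hv, pd_ne _ _ _ hne⟩
  · exact absurd rfl hne

lemma epsC_sub_single_inl (m : DVar N →₀ ℕ) (w : Fin N × ℕ) :
    epsC (m - Finsupp.single (Sum.inl w : DVar N) 1) = epsC m := by
  simp [epsC, Finsupp.tsub_apply, Finsupp.single_apply]

lemma dx_ne_eps (f : DP N) (m : DVar N →₀ ℕ) (h : dx f m ≠ 0) :
    ∃ m', epsC m' = epsC m ∧ f m' ≠ 0 := by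
  obtain ⟨α, i, _, hf⟩ := dx_ne f m h
  refine ⟨_, ?_, hf⟩
  rw [epsC_add, epsC_sub_single_inl, epsC_single_inl, add_zero]

lemma dx_iter_ne_eps (n : ℕ) (f : DP N) (m : DVar N →₀ ℕ) (h : dx^[n] f m ≠ 0) :
    ∃ m', epsC m' = epsC m ∧ f m' ≠ 0 := by
  induction n generalizing m with
  | zero => exact ⟨m, rfl, h⟩
  | succ n ih =>
    rw [Function.iterate_succ_apply'] at h
    obtain ⟨m', he, hf⟩ := dx_ne_eps _ m h
    obtain ⟨m'', he', hf'⟩ := ih m' hf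
    exact ⟨m'', he'.trans he, hf'⟩

end DP
namespace DP
variable {N : ℕ}

lemma hom_add {k : ℤ} {f g : DP N} (hf : IsHomog k f) (hg : IsHomog k g) :
    IsHomog k (f + g) := by
  intro m hm
  rw [co_def, add_app] at hm
  by_cases h1 : f m = 0
  · exact hg m (by rw [co_def]; intro h2; exact hm (by rw [h1, h2, add_zero]))
  · exact hf m h1

lemma hom_dx {k : ℤ} {f : DP N} (hf : IsHomog k f) : IsHomog (k + 1) (dx f) := by
  rw [homog_iff] at hf ⊢
  intro m hm
  obtain ⟨α, i, hv, hne⟩ := dx_ne f m hm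
  have h := hf _ hne
  have hj : jw (m - Finsupp.single (Sum.inl (α, i + 1)) 1 + Finsupp.single (Sum.inl (α, i)) 1)
      = jw (m - Finsupp.single (Sum.inl (α, i + 1)) 1) + i := by
    rw [jw_add, jw_single]; simp [jwt]
  have hm' : jw m = jw (m - Finsupp.single (Sum.inl (α, i + 1)) 1) + (i + 1) := by
    conv_lhs => rw [← sub_add_single m _ hv]
    rw [jw_add, jw_single]; simp [jwt]
  have he : epsC (m - Finsupp.single (Sum.inl (α, i + 1)) 1 + Finsupp.single (Sum.inl (α, i)) 1)
      = epsC m := by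
    rw [epsC_add, epsC_sub_single_inl, epsC_single_inl, add_zero]
  rw [hj, he] at h
  rw [hm']
  push_cast at h ⊢
  omega

lemma uv_app (α : Fin N) (i : ℕ) (m : DVar N →₀ ℕ) :
    uv α i m = if m = Finsupp.single (Sum.inl (α, i)) 1 then 1 else 0 :=
  MvPowerSeries.coeff_X m (Sum.inl (α, i))

lemma hom_uv (α : Fin N) (i : ℕ) : IsHomog (i : ℤ) (uv α i) := by
  rw [homog_iff]
  intro m hm
  rw [uv_app] at hm
  have : m = Finsupp.single (Sum.inl (α, i)) 1 := by
    by_contra h; rw [if_neg h] at hm; exact hm rfl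
  subst this
  rw [jw_single, epsC_single_inl]
  simp [jwt]

lemma hom_ut {r : Fin N → DP N} (hr : ∀ α, IsHomog (-1) (r α) ∧ IsDiffPoly (r α))
    {ut : Fin N → DP N} (hut : ∀ α, ut α = uv α 0 + dx (r α)) (α : Fin N) :
    IsHomog 0 (ut α) := by
  rw [hut]
  refine hom_add ?_ ?_
  · simpa using hom_uv α 0
  · simpa using hom_dx (hr α).1

/-- bound `p ≤ epsC` for `∂/∂u^μ_p` of a degree-0 homogeneous series. -/
lemma pd_eps_bound {h : DP N} (hh : IsHomog 0 h) (μ : Fin N) (p : ℕ)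
    (m : DVar N →₀ ℕ) (hm : pd (Sum.inl (μ, p)) h m ≠ 0) : p ≤ epsC m := by
  rw [homog_iff] at hh
  have := hh _ (pd_ne _ _ _ hm)
  rw [jw_add, jw_single, epsC_add, epsC_single_inl] at this
  have hj : jwt (Sum.inl (μ, p) : DVar N) = p := rfl
  rw [hj] at this
  omega

/-- bound `q + 1 ≤ epsC` for `∂/∂u^ν_q` of a degree-(-1) homogeneous series. -/
lemma pd_eps_bound' {f : DP N} (hf : IsHomog (-1) f) (ν : Fin N) (q : ℕ)
    (m : DVar N →₀ ℕ) (hm : pd (Sum.inl (ν, q)) f m ≠ 0) : q + 1 ≤ epsC m := by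
  rw [homog_iff] at hf
  have := hf _ (pd_ne _ _ _ hm)
  rw [jw_add, jw_single, epsC_add, epsC_single_inl] at this
  have hj : jwt (Sum.inl (ν, q) : DVar N) = q := rfl
  rw [hj] at this
  omega

/-- ε-bound on the series `(-1)^q • dx^[q] (pd (ν,q) (ut β))`. -/
lemma gq_eps_bound {h : DP N} (hh : IsHomog 0 h) (ν : Fin N) (q : ℕ)
    (m : DVar N →₀ ℕ)
    (hm : (((-1 : ℂ) ^ q) • dx^[q] (pd (Sum.inl (ν, q)) h)) m ≠ 0) : q ≤ epsC m := by
  rw [smul_app] at hm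
  have hm' : dx^[q] (pd (Sum.inl (ν, q)) h) m ≠ 0 :=
    fun h2 => hm (by rw [h2, mul_zero])
  obtain ⟨m', he, hne⟩ := dx_iter_ne_eps q _ m hm'
  rw [← he]
  exact pd_eps_bound hh ν q m' hne

end DP
namespace DP
variable {N : ℕ}

/-- Two series agree on all monomials of ε-count at most `e`. -/
def LowEq (e : ℕ) (g g' : DP N) : Prop := ∀ m, epsC m ≤ e → g m = g' m

lemma lowEq_pd_inl (e : ℕ) {g g' : DP N} (h : LowEq e g g') (w : Fin N × ℕ) :
    LowEq e (pd (Sum.inl w) g) (pd (Sum.inl w) g') := by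
  intro m hm
  rw [pd_app, pd_app, h _ (by rw [epsC_add, epsC_single_inl, add_zero]; exact hm)]

lemma lowEq_dx (e : ℕ) {g g' : DP N} (h : LowEq e g g') : LowEq e (dx g) (dx g') := by
  intro m hm
  rw [dx_app, dx_app]
  refine Finset.sum_congr rfl fun v _ => ?_
  rcases v with ⟨α, _ | i⟩ | ⟨⟩
  · rfl
  · exact lowEq_pd_inl e h (α, i) _ (by rw [epsC_sub_single_inl]; exact hm)
  · rfl

lemma lowEq_dx_iter (e n : ℕ) {g g' : DP N} (h : LowEq e g g') :
    LowEq e (dx^[n] g) (dx^[n] g') := by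
  induction n generalizing g g' with
  | zero => exact h
  | succ n ih => exact ih (lowEq_dx e h)

lemma lowEq_smul (e : ℕ) (c : ℂ) {g g' : DP N} (h : LowEq e g g') :
    LowEq e (c • g) (c • g') := by
  intro m hm; rw [smul_app, smul_app, h m hm]

lemma mul_lowEq {e : ℕ} (A : DP N) {g g' : DP N} (h : LowEq e g g')
    (m : DVar N →₀ ℕ) (hm : epsC m ≤ e) : (A * g) m = (A * g') m := by
  rw [mul_app, mul_app]
  refine Finset.sum_congr rfl fun p hp => ?_
  have hsum := Finset.HasAntidiagonal.mem_antidiagonal.mp hp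
  have : epsC p.2 ≤ e := by
    have := epsC_add p.1 p.2
    rw [hsum] at this
    omega
  rw [h p.2 this]

lemma lowEq_KopAp (K : Fin N → Fin N → ℕ → DP N) (μ ν : Fin N) (e : ℕ)
    {g g' : DP N} (h : LowEq e g g') : LowEq e (KopAp K μ ν g) (KopAp K μ ν g') := by
  intro m hm
  show (∑ᶠ j : ℕ, co (K μ ν j * dx^[j] g) m) = ∑ᶠ j : ℕ, co (K μ ν j * dx^[j] g') m
  exact finsum_congr fun j => mul_lowEq _ (lowEq_dx_iter e j h) m hm

lemma KopAp_zero (K : Fin N → Fin N → ℕ → DP N) (μ ν : Fin N) :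
    KopAp K μ ν (0 : DP N) = 0 := by
  funext m
  show (∑ᶠ j : ℕ, co (K μ ν j * dx^[j] (0 : DP N)) m) = 0
  have : ∀ j : ℕ, co (K μ ν j * dx^[j] (0 : DP N)) m = 0 := by
    intro j
    rw [dx_iter_zero, mul_zero]
    rfl
  rw [finsum_congr this, finsum_zero]

lemma KopAp_sum (K : Fin N → Fin N → ℕ → DP N) (μ ν : Fin N) (J : ℕ)
    (hJ : ∀ j, J ≤ j → K μ ν j = 0) {ι : Type*} (s : Finset ι) (g : ι → DP N) :
    KopAp K μ ν (∑ i ∈ s, g i) = ∑ i ∈ s, KopAp K μ ν (g i) := by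
  classical
  funext m
  show (∑ᶠ j : ℕ, co (K μ ν j * dx^[j] (∑ i ∈ s, g i)) m)
      = (∑ i ∈ s, KopAp K μ ν (g i)) m
  have h1 : ∀ j : ℕ, co (K μ ν j * dx^[j] (∑ i ∈ s, g i)) m
      = ∑ i ∈ s, co (K μ ν j * dx^[j] (g i)) m := by
    intro j
    rw [dx_iter_sum, Finset.mul_sum]
    exact sum_app s _ m
  rw [finsum_congr h1]
  have hsupp : ∀ i : ι, (Function.support fun j => co (K μ ν j * dx^[j] (g i)) m)
      ⊆ ↑(Finset.range J) := by
    intro i j hj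
    simp only [Finset.coe_range, Set.mem_Iio]
    by_contra hlt
    apply hj
    show co (K μ ν j * dx^[j] (g i)) m = 0
    rw [hJ j (by omega), zero_mul]
    rfl
  have hsupp2 : (Function.support fun j => ∑ i ∈ s, co (K μ ν j * dx^[j] (g i)) m)
      ⊆ ↑(Finset.range J) := by
    intro j hj
    simp only [Finset.coe_range, Set.mem_Iio]
    by_contra hlt
    apply hj
    show (∑ i ∈ s, co (K μ ν j * dx^[j] (g i)) m) = 0
    refine Finset.sum_eq_zero fun i _ => ?_
    rw [hJ j (by omega), zero_mul]
    rfl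
  rw [finsum_eq_finset_sum_of_support_subset _ hsupp2, Finset.sum_comm, sum_app]
  refine Finset.sum_congr rfl fun i _ => ?_
  show _ = ∑ᶠ j : ℕ, co (K μ ν j * dx^[j] (g i)) m
  rw [finsum_eq_finset_sum_of_support_subset _ (hsupp i)]

/-- `KopAp` applied to a constant multiple of `1` vanishes when `K _ _ 0 = 0`. -/
lemma KopAp_const (K : Fin N → Fin N → ℕ → DP N) (μ ν : Fin N)
    (hK0 : K μ ν 0 = 0) (c : ℂ) : KopAp K μ ν (c • (1 : DP N)) = 0 := by
  funext m
  show (∑ᶠ j : ℕ, co (K μ ν j * dx^[j] (c • (1 : DP N))) m) = 0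
  have : ∀ j : ℕ, co (K μ ν j * dx^[j] (c • (1 : DP N))) m = 0 := by
    intro j
    match j with
    | 0 => rw [Function.iterate_zero_apply, hK0, zero_mul]; rfl
    | j + 1 =>
      rw [Function.iterate_succ_apply, dx_smul, dx_one, smul_zero, dx_iter_zero,
        mul_zero]
      rfl
  rw [finsum_congr this, finsum_zero]

end DP
namespace DP
variable {N : ℕ}

lemma app_add_single (m : DVar N →₀ ℕ) (a b : DVar N) (k : ℕ) :
    (m + Finsupp.single a k) b = m b + (if a = b then k else 0) := by
  rw [Finsupp.add_apply, Finsupp.single_apply]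

lemma app_sub_single (m : DVar N →₀ ℕ) (a b : DVar N) (k : ℕ) :
    (m - Finsupp.single a k) b = m b - (if a = b then k else 0) := by
  rw [Finsupp.tsub_apply, Finsupp.single_apply]

lemma sub_swap_single (m : DVar N →₀ ℕ) (v V : DVar N) (hv : m v ≠ 0) :
    (m + Finsupp.single V 1) - Finsupp.single v 1
      = (m - Finsupp.single v 1) + Finsupp.single V 1 := by
  ext w
  by_cases h1 : v = w
  · subst h1
    by_cases h2 : V = v <;>
      simp [Finsupp.add_apply, Finsupp.tsub_apply, Finsupp.single_apply, h2] <;> omega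
  · by_cases h2 : V = w <;>
      simp [Finsupp.add_apply, Finsupp.tsub_apply, Finsupp.single_apply, h1, h2]

/-- Off-diagonal terms of the `pd`–`dx` commutator computation. -/
lemma pd_dx_offdiag (ν : Fin N) (q : ℕ) (f : DP N) (m : DVar N →₀ ℕ) (v : DVar N)
    (hmv : m v ≠ 0) (hvne : v ≠ Sum.inl (ν, q)) :
    ((m (Sum.inl (ν, q)) : ℂ) + 1) *
        dxT f (m + Finsupp.single (Sum.inl (ν, q)) 1) v
      = dxT (pd (Sum.inl (ν, q)) f) m v := by
  classical
  rcases v with ⟨α, _ | i⟩ | ⟨⟩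
  · simp [dxT]
  · -- v = inl (α, i+1)
    simp only [dxT]
    rw [sub_swap_single m _ _ hmv]
    set W : DVar N := Sum.inl (α, i) with hWd
    set V : DVar N := Sum.inl (ν, q) with hVd
    set t : DVar N →₀ ℕ := m - Finsupp.single (Sum.inl (α, i + 1)) 1 with ht
    rw [pd_app, pd_app, pd_app]
    have harg : t + Finsupp.single V 1 + Finsupp.single W 1
        = t + Finsupp.single W 1 + Finsupp.single V 1 := add_right_comm _ _ _
    rw [harg]
    have h1 : (t + Finsupp.single V 1 : DVar N →₀ ℕ) W = t W + (if V = W then 1 else 0) :=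
      app_add_single t V W 1
    have h2 : (t + Finsupp.single W 1 : DVar N →₀ ℕ) V = t V + (if W = V then 1 else 0) :=
      app_add_single t W V 1
    have hmsV : t V = m V := by
      rw [ht, app_sub_single, if_neg hvne, Nat.sub_zero]
    rw [h1, h2, hmsV]
    by_cases hWV : V = W
    · have htW : t W = m V := by rw [← hWV, hmsV]
      rw [if_pos hWV, if_pos hWV.symm, htW]
      try push_cast
      try ring
    · rw [if_neg hWV, if_neg (fun h => hWV h.symm), Nat.add_zero, Nat.add_zero]
      try push_cast
      try ring
  · simp [dxT]

/-- The `pd`–`dx` commutator computation, split form. -/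
lemma pd_dx_split (ν : Fin N) (q : ℕ) (f : DP N) (m : DVar N →₀ ℕ) :
    pd (Sum.inl (ν, q)) (dx f) m
      = dx (pd (Sum.inl (ν, q)) f) m
        + (((m (Sum.inl (ν, q)) : ℂ) + 1) *
            dxT f (m + Finsupp.single (Sum.inl (ν, q)) 1) (Sum.inl (ν, q))
          - (if m (Sum.inl (ν, q)) ≠ 0
              then dxT (pd (Sum.inl (ν, q)) f) m (Sum.inl (ν, q)) else 0)) := by
  classical
  have hVmem : (Sum.inl (ν, q) : DVar N) ∈
      (m + Finsupp.single (Sum.inl (ν, q)) 1).support := by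
    rw [Finsupp.mem_support_iff, app_add_single, if_pos rfl]
    omega
  have hsubset : m.support ⊆ (m + Finsupp.single (Sum.inl (ν, q) : DVar N) 1).support := by
    intro v hv
    rw [Finsupp.mem_support_iff] at hv ⊢
    rw [app_add_single]
    omega
  have hL : pd (Sum.inl (ν, q)) (dx f) m
      = ∑ v ∈ (m + Finsupp.single (Sum.inl (ν, q) : DVar N) 1).support,
          ((m (Sum.inl (ν, q)) : ℂ) + 1) *
            dxT f (m + Finsupp.single (Sum.inl (ν, q)) 1) v := by
    rw [pd_app, dx_app, Finset.mul_sum]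
  have hR : dx (pd (Sum.inl (ν, q)) f) m
      = ∑ v ∈ (m + Finsupp.single (Sum.inl (ν, q) : DVar N) 1).support,
          (if m v ≠ 0 then dxT (pd (Sum.inl (ν, q)) f) m v else 0) := by
    rw [dx_app]
    have e1 : ∑ v ∈ m.support, dxT (pd (Sum.inl (ν, q)) f) m v
        = ∑ v ∈ m.support,
            (if m v ≠ 0 then dxT (pd (Sum.inl (ν, q)) f) m v else 0) :=
      Finset.sum_congr rfl fun v hv => (if_pos (Finsupp.mem_support_iff.mp hv)).symm
    rw [e1]
    refine Finset.sum_subset hsubset fun v _ hvm => ?_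
    rw [Finsupp.notMem_support_iff] at hvm
    simp [hvm]
  rw [hL, hR, ← Finset.sum_erase_add _ _ hVmem, ← Finset.sum_erase_add _ _ hVmem]
  have hmain : ∀ v ∈ (m + Finsupp.single (Sum.inl (ν, q) : DVar N) 1).support.erase
      (Sum.inl (ν, q)),
      ((m (Sum.inl (ν, q)) : ℂ) + 1) *
          dxT f (m + Finsupp.single (Sum.inl (ν, q)) 1) v
        = (if m v ≠ 0 then dxT (pd (Sum.inl (ν, q)) f) m v else 0) := by
    intro v hv
    obtain ⟨hvne, hvM⟩ := Finset.mem_erase.mp hv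
    have hmv : m v ≠ 0 := by
      have := Finsupp.mem_support_iff.mp hvM
      rw [app_add_single, if_neg (fun h => hvne h.symm)] at this
      omega
    rw [if_pos hmv]
    exact pd_dx_offdiag ν q f m v hmv hvne
  rw [Finset.sum_congr rfl hmain]
  ring

end DP
namespace DP
variable {N : ℕ}

lemma pd_dx_comm_zero (ν : Fin N) (f : DP N) :
    pd (Sum.inl (ν, 0)) (dx f) = dx (pd (Sum.inl (ν, 0)) f) := by
  funext m
  rw [pd_dx_split]
  simp [dxT]

lemma pd_dx_comm_succ (ν : Fin N) (i : ℕ) (f : DP N) :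
    pd (Sum.inl (ν, i + 1)) (dx f)
      = dx (pd (Sum.inl (ν, i + 1)) f) + pd (Sum.inl (ν, i)) f := by
  funext m
  rw [add_app, pd_dx_split]
  congr 1
  -- the correction term
  set V : DVar N := Sum.inl (ν, i + 1) with hVd
  set W : DVar N := Sum.inl (ν, i) with hWd
  have hWV : W ≠ V := by
    rw [hWd, hVd]
    intro h
    have := (Prod.mk.injEq _ _ _ _).mp (Sum.inl.injEq _ _ |>.mp h)
    omega
  have hd1 : dxT f (m + Finsupp.single V 1) V = pd W f m := by
    show pd W f (m + Finsupp.single V 1 - Finsupp.single V 1) = pd W f m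
    rw [add_tsub_cancel_right]
  rw [hd1]
  by_cases hmV : m V = 0
  · rw [if_neg (by omega), hmV]
    norm_num
  · rw [if_pos hmV]
    have hd2 : dxT (pd V f) m V = pd W (pd V f) (m - Finsupp.single V 1) := rfl
    rw [hd2]
    set t : DVar N →₀ ℕ := m - Finsupp.single V 1 with htd
    rw [pd_app, pd_app, pd_app]
    have h1 : t W = m W := by
      rw [htd, app_sub_single, if_neg (fun h => hWV h.symm), Nat.sub_zero]
    have h2 : (t + Finsupp.single W 1 : DVar N →₀ ℕ) V = m V - 1 := by
      rw [app_add_single, if_neg hWV, Nat.add_zero, htd, app_sub_single, if_pos rfl]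
    have h3 : t + Finsupp.single W 1 + Finsupp.single V 1 = m + Finsupp.single W 1 := by
      rw [add_right_comm, htd, sub_add_single m V hmV]
    rw [h1, h2, h3]
    have h4 : ((m V - 1 : ℕ) : ℂ) = (m V : ℂ) - 1 := by
      have h5 : 1 ≤ m V := Nat.one_le_iff_ne_zero.mpr hmV
      push_cast [h5]
      ring
    rw [h4]
    ring

lemma pd_uv_succ (ν β : Fin N) (q : ℕ) (hq : q ≠ 0) :
    pd (Sum.inl (ν, q)) (uv β 0) = 0 := by
  funext m
  rw [pd_app, uv_app, zero_app]
  rw [if_neg, mul_zero]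
  intro h
  have h2 := congrArg (fun n : DVar N →₀ ℕ => n (Sum.inl (ν, q))) h
  have hne : (Sum.inl (β, 0) : DVar N) ≠ Sum.inl (ν, q) := by
    intro h'
    rw [Sum.inl.injEq, Prod.mk.injEq] at h'
    exact hq h'.2.symm
  simp only [app_add_single, Finsupp.single_apply, eq_self_iff_true, if_true,
    if_neg hne] at h2
  omega

lemma pd_uv_zero (ν β : Fin N) :
    pd (Sum.inl (ν, 0)) (uv β 0) = if ν = β then (1 : DP N) else 0 := by
  funext m
  rw [pd_app, uv_app]
  by_cases hνβ : ν = β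
  · rw [if_pos hνβ, hνβ]
    by_cases hm : m = 0
    · subst hm
      rw [if_pos (by rw [zero_add]), one_app, if_pos rfl]
      norm_num
    · rw [if_neg, one_app, if_neg hm, mul_zero]
      intro h
      apply hm
      have : m + Finsupp.single (Sum.inl (β, 0) : DVar N) 1
          = 0 + Finsupp.single (Sum.inl (β, 0) : DVar N) 1 := by
        rw [zero_add]; exact h
      exact add_right_cancel this
  · rw [if_neg hνβ, if_neg, mul_zero, zero_app]
    intro h
    have h2 := congrArg (fun n : DVar N →₀ ℕ => n (Sum.inl (ν, 0))) h
    have hne : (Sum.inl (β, 0) : DVar N) ≠ Sum.inl (ν, 0) := by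
      intro h'
      rw [Sum.inl.injEq, Prod.mk.injEq] at h'
      exact hνβ h'.1.symm
    simp only [app_add_single, Finsupp.single_apply, eq_self_iff_true, if_true,
      if_neg hne] at h2
    omega

/-- telescoping: the variational derivative kills `∂_x`-exact terms,
at the level of a single coefficient. -/
lemma vd_dx_zero {r : DP N} (hr : IsHomog (-1) r) (ν : Fin N) (m2 : DVar N →₀ ℕ) :
    (∑ᶠ q : ℕ, (((-1 : ℂ) ^ q) • dx^[q] (pd (Sum.inl (ν, q)) (dx r))) m2) = 0 := by
  classical
  have hdxr : IsHomog 0 (dx r) := by simpa using hom_dx hr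
  set b : ℕ → ℂ := fun q => ((-1 : ℂ) ^ q) * (dx^[q + 1] (pd (Sum.inl (ν, q)) r)) m2
    with hb
  set A : ℕ → ℂ := fun q => match q with | 0 => 0 | s + 1 => b s with hA
  have hterm : ∀ q : ℕ,
      (((-1 : ℂ) ^ q) • dx^[q] (pd (Sum.inl (ν, q)) (dx r))) m2 = A (q + 1) - A q := by
    intro q
    match q with
    | 0 =>
      rw [Function.iterate_zero_apply, pd_dx_comm_zero, smul_app]
      show (-1 : ℂ) ^ 0 * dx (pd (Sum.inl (ν, 0)) r) m2
        = (-1 : ℂ) ^ 0 * dx^[0 + 1] (pd (Sum.inl (ν, 0)) r) m2 - 0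
      simp
    | s + 1 =>
      rw [pd_dx_comm_succ, dx_iter_add]
      rw [(Function.iterate_succ_apply dx (s + 1) (pd (Sum.inl (ν, s + 1)) r)).symm]
      rw [smul_app, add_app]
      show (-1 : ℂ) ^ (s + 1) * (dx^[s + 1 + 1] (pd (Sum.inl (ν, s + 1)) r) m2
            + dx^[s + 1] (pd (Sum.inl (ν, s)) r) m2)
          = (-1 : ℂ) ^ (s + 1) * dx^[s + 1 + 1] (pd (Sum.inl (ν, s + 1)) r) m2
            - (-1 : ℂ) ^ s * dx^[s + 1] (pd (Sum.inl (ν, s)) r) m2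
      rw [pow_succ]
      ring
  have hsupp : (Function.support fun q =>
      (((-1 : ℂ) ^ q) • dx^[q] (pd (Sum.inl (ν, q)) (dx r))) m2)
      ⊆ ↑(Finset.range (epsC m2 + 1)) := by
    intro q hq
    simp only [Finset.coe_range, Set.mem_Iio]
    have := gq_eps_bound hdxr ν q m2 hq
    omega
  rw [finsum_eq_finset_sum_of_support_subset _ hsupp,
    Finset.sum_congr rfl fun q _ => hterm q, Finset.sum_range_sub A]
  have hAz : A 0 = 0 := rfl
  have hAe : A (epsC m2 + 1) = 0 := by
    show b (epsC m2) = 0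
    rw [hb]
    by_contra hbe
    have hne : (dx^[epsC m2 + 1] (pd (Sum.inl (ν, epsC m2)) r)) m2 ≠ 0 := by
      intro h
      apply hbe
      show (-1 : ℂ) ^ epsC m2 * (dx^[epsC m2 + 1] (pd (Sum.inl (ν, epsC m2)) r)) m2 = 0
      rw [h, mul_zero]
    obtain ⟨m', he, hne'⟩ := dx_iter_ne_eps _ _ _ hne
    have := pd_eps_bound' hr ν (epsC m2) m' hne'
    omega
  rw [hAz, hAe, sub_zero]

end DP
namespace DP
variable {N : ℕ}

/-- Evaluation of `Σ_q (-∂_x)^q (∂ũ^β/∂u^ν_q)` for `ũ^β = u^β + ∂_x r`. -/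
lemma C_eval {r : DP N} (hr : IsHomog (-1) r) {utβ : DP N} {β : Fin N}
    (hutβ : utβ = uv β 0 + dx r) (ν : Fin N) (m2 : DVar N →₀ ℕ) :
    (∑ᶠ q : ℕ, (((-1 : ℂ) ^ q) • dx^[q] (pd (Sum.inl (ν, q)) utβ)) m2)
      = (if ν = β then (1 : DP N) else 0) m2 := by
  classical
  subst hutβ
  have hdxr : IsHomog 0 (dx r) := by simpa using hom_dx hr
  have hsplit : ∀ q : ℕ,
      (((-1 : ℂ) ^ q) • dx^[q] (pd (Sum.inl (ν, q)) (uv β 0 + dx r))) m2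
        = (((-1 : ℂ) ^ q) • dx^[q] (pd (Sum.inl (ν, q)) (uv β 0))) m2
          + (((-1 : ℂ) ^ q) • dx^[q] (pd (Sum.inl (ν, q)) (dx r))) m2 := by
    intro q
    rw [pd_add, dx_iter_add, smul_add, add_app]
  rw [finsum_congr hsplit]
  have hfA : (Function.support fun q : ℕ =>
      (((-1 : ℂ) ^ q) • dx^[q] (pd (Sum.inl (ν, q)) (uv β 0))) m2).Finite := by
    refine Set.Finite.subset (Set.finite_singleton 0) ?_
    intro q hq
    simp only [Set.mem_singleton_iff]
    by_contra hq0
    apply hq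
    show (((-1 : ℂ) ^ q) • dx^[q] (pd (Sum.inl (ν, q)) (uv β 0))) m2 = 0
    rw [pd_uv_succ ν β q hq0, dx_iter_zero, smul_zero, zero_app]
  have hfB : (Function.support fun q : ℕ =>
      (((-1 : ℂ) ^ q) • dx^[q] (pd (Sum.inl (ν, q)) (dx r))) m2).Finite := by
    refine Set.Finite.subset (Set.finite_Icc 0 (epsC m2)) ?_
    intro q hq
    simp only [Set.mem_Icc]
    exact ⟨Nat.zero_le q, gq_eps_bound hdxr ν q m2 hq⟩
  rw [finsum_add_distrib hfA hfB, vd_dx_zero hr ν m2, add_zero]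
  rw [finsum_eq_single _ 0 (fun q hq => by
    show (((-1 : ℂ) ^ q) • dx^[q] (pd (Sum.inl (ν, q)) (uv β 0))) m2 = 0
    rw [pd_uv_succ ν β q hq, dx_iter_zero, smul_zero, zero_app])]
  rw [Function.iterate_zero_apply, pd_uv_zero, smul_app]
  norm_num

end DP

open DP in
/-- Lemma on the constant term of a hamiltonian operator under
a Miura transformation of the form `ũ^α = u^α + ∂_x r^α`.  The constant term
of an operator `Σ_j C_j ∂_x^j` is `C_0`, i.e. its value on the constant
differential polynomial `1`. -/
theorem statement1 (N : ℕ) (K : Fin N → Fin N → ℕ → DP N)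
    (hfin : ∀ μ ν, ∃ J : ℕ, ∀ j, J ≤ j → K μ ν j = 0)
    (hdeg : ∀ (μ ν : Fin N) (j : ℕ), IsHomog (1 - (j : ℤ)) (K μ ν j))
    (hpoly : ∀ μ ν j, IsDiffPoly (K μ ν j))
    (hK0 : ∀ μ ν, K μ ν 0 = 0)
    (r : Fin N → DP N)
    (hr : ∀ α, IsHomog (-1) (r α) ∧ IsDiffPoly (r α))
    (ut : Fin N → DP N) (hut : ∀ α, ut α = uv α 0 + dx (r α)) :
    ∀ α β : Fin N, miuraK K ut α β (1 : DP N) = 0 := by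
  classical
  intro α β
  funext m
  show (∑ᶠ p : ℕ, ∑ᶠ q : ℕ,
      co (∑ μ : Fin N, ∑ ν : Fin N,
        pd (Sum.inl (μ, p)) (ut α) *
          dx^[p] (KopAp K μ ν
            (((-1 : ℂ) ^ q) • dx^[q] (pd (Sum.inl (ν, q)) (ut β) * 1)))) m) = 0
  simp only [mul_one]
  have hut0 : ∀ γ, IsHomog 0 (ut γ) := hom_ut hr hut
  -- ε-bound for the `q`-summand series
  have hgb : ∀ (ν : Fin N) (q : ℕ) (m2 : DVar N →₀ ℕ),
      (((-1 : ℂ) ^ q) • dx^[q] (pd (Sum.inl (ν, q)) (ut β))) m2 ≠ 0 → q ≤ epsC m2 :=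
    fun ν q m2 h => gq_eps_bound (hut0 β) ν q m2 h
  have hg0 : ∀ (ν : Fin N) (q : ℕ), epsC m < q →
      LowEq (epsC m) (((-1 : ℂ) ^ q) • dx^[q] (pd (Sum.inl (ν, q)) (ut β))) 0 := by
    intro ν q hq m2 hm2
    rw [zero_app]
    by_contra hne
    have := hgb ν q m2 hne
    omega
  -- locality of the full coefficient functional
  have hΦ0 : ∀ (μ ν : Fin N) (p : ℕ) (gg : DP N), LowEq (epsC m) gg 0 →
      co (pd (Sum.inl (μ, p)) (ut α) * dx^[p] (KopAp K μ ν gg)) m = 0 := by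
    intro μ ν p gg hgg
    have h1 : LowEq (epsC m) (KopAp K μ ν gg) 0 := by
      have := lowEq_KopAp K μ ν (epsC m) hgg
      rwa [KopAp_zero] at this
    have h2 : LowEq (epsC m) (dx^[p] (KopAp K μ ν gg)) 0 := by
      have := lowEq_dx_iter (epsC m) p h1
      rwa [dx_iter_zero] at this
    have h3 := mul_lowEq (pd (Sum.inl (μ, p)) (ut α)) h2 m (le_refl _)
    rw [co_def, h3, mul_zero, zero_app]
  have hΦconst : ∀ (μ ν : Fin N) (p : ℕ),
      co (pd (Sum.inl (μ, p)) (ut α) *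
        dx^[p] (KopAp K μ ν (if ν = β then (1 : DP N) else 0))) m = 0 := by
    intro μ ν p
    have hz : KopAp K μ ν (if ν = β then (1 : DP N) else 0) = 0 := by
      by_cases hνβ : ν = β
      · rw [if_pos hνβ]
        have h1 := KopAp_const K μ ν (hK0 μ ν) 1
        rwa [one_smul] at h1
      · rw [if_neg hνβ]
        exact KopAp_zero K μ ν
    rw [hz, dx_iter_zero, mul_zero, co_def, zero_app]
  -- splitting the coefficient of the matrix sum
  have hco : ∀ p q : ℕ,
      co (∑ μ : Fin N, ∑ ν : Fin N,
        pd (Sum.inl (μ, p)) (ut α) *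
          dx^[p] (KopAp K μ ν
            (((-1 : ℂ) ^ q) • dx^[q] (pd (Sum.inl (ν, q)) (ut β))))) m
      = ∑ μ : Fin N, ∑ ν : Fin N,
          co (pd (Sum.inl (μ, p)) (ut α) *
            dx^[p] (KopAp K μ ν
              (((-1 : ℂ) ^ q) • dx^[q] (pd (Sum.inl (ν, q)) (ut β))))) m := by
    intro p q
    rw [co_def, sum_app]
    exact Finset.sum_congr rfl fun μ _ => sum_app _ _ _
  -- the inner finsum vanishes for every p
  have hmain : ∀ p : ℕ, (∑ᶠ q : ℕ,
      co (∑ μ : Fin N, ∑ ν : Fin N,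
        pd (Sum.inl (μ, p)) (ut α) *
          dx^[p] (KopAp K μ ν
            (((-1 : ℂ) ^ q) • dx^[q] (pd (Sum.inl (ν, q)) (ut β))))) m) = 0 := by
    intro p
    have hsupp : (Function.support fun q : ℕ =>
        co (∑ μ : Fin N, ∑ ν : Fin N,
          pd (Sum.inl (μ, p)) (ut α) *
            dx^[p] (KopAp K μ ν
              (((-1 : ℂ) ^ q) • dx^[q] (pd (Sum.inl (ν, q)) (ut β))))) m)
        ⊆ ↑(Finset.range (epsC m + 1)) := by
      intro q hq
      simp only [Finset.coe_range, Set.mem_Iio]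
      by_contra hlt
      apply hq
      show co (∑ μ : Fin N, ∑ ν : Fin N,
          pd (Sum.inl (μ, p)) (ut α) *
            dx^[p] (KopAp K μ ν
              (((-1 : ℂ) ^ q) • dx^[q] (pd (Sum.inl (ν, q)) (ut β))))) m = 0
      rw [hco p q]
      exact Finset.sum_eq_zero fun μ _ => Finset.sum_eq_zero fun ν _ =>
        hΦ0 μ ν p _ (hg0 ν q (by omega))
    rw [finsum_eq_finset_sum_of_support_subset _ hsupp]
    rw [Finset.sum_congr rfl fun q _ => hco p q, Finset.sum_comm]
    refine Finset.sum_eq_zero fun μ _ => ?_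
    rw [Finset.sum_comm]
    refine Finset.sum_eq_zero fun ν _ => ?_
    obtain ⟨J, hJ⟩ := hfin μ ν
    have hlin : (∑ q ∈ Finset.range (epsC m + 1),
        co (pd (Sum.inl (μ, p)) (ut α) *
          dx^[p] (KopAp K μ ν
            (((-1 : ℂ) ^ q) • dx^[q] (pd (Sum.inl (ν, q)) (ut β))))) m)
        = co (pd (Sum.inl (μ, p)) (ut α) *
            dx^[p] (KopAp K μ ν (∑ q ∈ Finset.range (epsC m + 1),
              ((-1 : ℂ) ^ q) • dx^[q] (pd (Sum.inl (ν, q)) (ut β))))) m := by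
      rw [KopAp_sum K μ ν J hJ, dx_iter_sum, Finset.mul_sum, co_def, sum_app]
      rfl
    rw [hlin]
    have hloc : LowEq (epsC m)
        (∑ q ∈ Finset.range (epsC m + 1),
          ((-1 : ℂ) ^ q) • dx^[q] (pd (Sum.inl (ν, q)) (ut β)))
        (if ν = β then (1 : DP N) else 0) := by
      intro m2 hm2
      rw [sum_app]
      have hsupp2 : (Function.support fun q : ℕ =>
          (((-1 : ℂ) ^ q) • dx^[q] (pd (Sum.inl (ν, q)) (ut β))) m2)
          ⊆ ↑(Finset.range (epsC m + 1)) := by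
        intro q hq
        simp only [Finset.coe_range, Set.mem_Iio]
        have := hgb ν q m2 hq
        omega
      rw [← finsum_eq_finset_sum_of_support_subset _ hsupp2]
      exact C_eval (hr β).1 (hut β) ν m2
    have hsw := mul_lowEq (pd (Sum.inl (μ, p)) (ut α))
      (lowEq_dx_iter _ p (lowEq_KopAp K μ ν _ hloc)) m (le_refl _)
    rw [co_def, hsw]
    exact hΦconst μ ν p
  exact finsum_eq_zero_of_forall_eq_zero hmain
end

section
/- Consider a hamiltonian hierarchy whose hamiltonian operator satisfies K^{αβ} = η^{αβ}∂_x + O(ε) for a constant symmetric nondegenerate matrix η, equipped with a tau-structure h_{β,q}, q ≥ −1, in normal coordinates, i.e. h_{α,−1} = η_{αμ}u^μ, and normalized so that h_{β,q}|_{u^*_*=0} = 0. Then for every p ≥ 0 one has ∂_x h_{α,p−1} = η_{1μ} K^{μν} δh̄_{α,p}/δu^ν, and consequently the tau-symmetric densities h_{β,q} are uniquely determined by the Hamiltonians h̄_{α,p} and the hamiltonian operator K. -/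
namespace DP

variable {N : ℕ}

lemma co_ofCo (F : (DVar N →₀ ℕ) → ℂ) (m : DVar N →₀ ℕ) : co (ofCo F) m = F m := rfl

lemma co_pd (v : DVar N) (f : DP N) (m : DVar N →₀ ℕ) :
    co (pd v f) m = ((m v : ℂ) + 1) * co f (m + Finsupp.single v 1) := rfl

lemma co_dx (f : DP N) (m : DVar N →₀ ℕ) :
    co (dx f) m = ∑ v ∈ m.support,
      (match v with
        | Sum.inl (α, i + 1) =>
            co (pd (Sum.inl (α, i)) f) (m - Finsupp.single (Sum.inl (α, i + 1)) 1)
        | _ => (0 : ℂ)) := rfl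

lemma co_sub (f g : DP N) (m : DVar N →₀ ℕ) : co (f - g) m = co f m - co g m :=
  map_sub (MvPowerSeries.coeff (R := ℂ) m) f g

lemma pd_sub (v : DVar N) (f g : DP N) : pd v (f - g) = pd v f - pd v g := by
  apply MvPowerSeries.ext; intro m
  show co (pd v (f - g)) m = co (pd v f - pd v g) m
  rw [co_sub, co_pd, co_pd, co_pd, co_sub]; ring

lemma dx_sub (f g : DP N) : dx (f - g) = dx f - dx g := by
  apply MvPowerSeries.ext; intro m
  show co (dx (f - g)) m = co (dx f - dx g) m
  rw [co_sub, co_dx, co_dx, co_dx, ← Finset.sum_sub_distrib]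
  refine Finset.sum_congr rfl fun v _ => ?_
  rcases v with ⟨α, _ | i⟩ | ⟨⟩ <;> simp [pd_sub, co_sub]

/-- Coefficient of `f * X v`. -/
lemma co_mul_X (f : DP N) (v : DVar N) (m : DVar N →₀ ℕ) :
    co (f * MvPowerSeries.X v) m =
      if Finsupp.single v 1 ≤ m then co f (m - Finsupp.single v 1) else 0 := by
  rw [co, MvPowerSeries.X, MvPowerSeries.coeff_mul_monomial]
  split_ifs <;> simp [co]

lemma single_le_iff_mem {v : DVar N} {m : DVar N →₀ ℕ} :
    Finsupp.single v 1 ≤ m ↔ v ∈ m.support := by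
  rw [Finsupp.single_le_iff, Finsupp.mem_support_iff]
  omega

lemma co_uv (γ : Fin N) (i : ℕ) (m : DVar N →₀ ℕ) :
    co (uv γ i) m = if m = Finsupp.single (Sum.inl (γ, i)) 1 then 1 else 0 := by
  rw [uv, co, MvPowerSeries.coeff_X]

/-- `∂_x u^γ_i = u^γ_{i+1}`. -/
lemma dx_uv (γ : Fin N) (i : ℕ) : dx (uv γ i) = uv γ (i + 1) := by
  apply MvPowerSeries.ext; intro m
  show co (dx (uv γ i)) m = co (uv γ (i+1)) m
  rw [co_dx, co_uv]
  by_cases hm : m = Finsupp.single (Sum.inl (γ, i + 1)) 1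
  · subst hm
    rw [if_pos rfl, Finsupp.support_single_ne_zero _ one_ne_zero, Finset.sum_singleton]
    show co (pd (Sum.inl (γ, i)) (uv γ i)) _ = 1
    rw [co_pd]
    rw [tsub_self, co_uv, zero_add, if_pos rfl]
    simp
  · rw [if_neg hm, Finset.sum_eq_zero]
    intro v hv
    rcases v with ⟨β, _ | j⟩ | ⟨⟩
    · rfl
    swap
    · rfl
    -- v = inl (β, j+1)
    show co (pd (Sum.inl (β, j)) (uv γ i)) _ = 0
    rw [co_pd, co_uv, if_neg, mul_zero]
    intro heq
    have hvm : m (Sum.inl (β, j + 1)) ≠ 0 := Finsupp.mem_support_iff.mp hv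
    have hne1 : (Sum.inl (β, j + 1) : DVar N) ≠ Sum.inl (β, j) := by simp
    -- evaluate at inl (β, j)
    have h1 := DFunLike.congr_fun heq (Sum.inl (β, j))
    simp only [Finsupp.add_apply, Finsupp.tsub_apply, Finsupp.single_apply, if_pos rfl,
      if_neg hne1, if_true] at h1
    have hβγ : (Sum.inl (γ, i) : DVar N) = Sum.inl (β, j) := by
      by_contra hne
      rw [if_neg hne] at h1
      omega
    obtain ⟨rfl, rfl⟩ : γ = β ∧ i = j := by
      injection hβγ with h'; exact ⟨congrArg Prod.fst h', congrArg Prod.snd h'⟩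
    -- now heq : (m - e_{γ,i+1}) + e_{γ,i} = e_{γ,i}
    apply hm
    have h0 : m - Finsupp.single (Sum.inl (γ, i + 1)) 1 = 0 := by
      have heq' : (m - Finsupp.single (Sum.inl (γ, i + 1)) 1) + Finsupp.single (Sum.inl (γ, i)) 1
          = 0 + Finsupp.single (Sum.inl (γ, i)) 1 := by rw [zero_add]; exact heq
      exact add_right_cancel heq'
    refine le_antisymm (tsub_eq_zero_iff_le.mp h0) (Finsupp.single_le_iff.mpr (Nat.one_le_iff_ne_zero.mpr hvm))

end DP
namespace DP

variable {N : ℕ}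

lemma dx_iter_uv1 (γ : Fin N) (n : ℕ) : dx^[n] (uv γ 1) = uv γ (n + 1) := by
  induction n with
  | zero => rfl
  | succ n ih => rw [Function.iterate_succ_apply', ih, dx_uv]

lemma co_smul (a : ℂ) (f : DP N) (m : DVar N →₀ ℕ) : co (a • f) m = a * co f m := by
  rw [co, map_smul, smul_eq_mul, co]

lemma co_sum {ι : Type*} (t : Finset ι) (g : ι → DP N) (m : DVar N →₀ ℕ) :
    co (∑ i ∈ t, g i) m = ∑ i ∈ t, co (g i) m :=
  map_sum (MvPowerSeries.coeff (R := ℂ) m) g t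

/-- `co (dx f) m` as a clean double sum. -/
lemma co_dx_eq_sum (f : DP N) (m : DVar N →₀ ℕ) (s : Finset ℕ)
    (hs : ∀ (γ : Fin N) (n : ℕ), Sum.inl (γ, n + 1) ∈ m.support → n ∈ s) :
    co (dx f) m = ∑ γ : Fin N, ∑ n ∈ s,
      (if Finsupp.single (Sum.inl (γ, n + 1)) 1 ≤ m then
        co (pd (Sum.inl (γ, n)) f) (m - Finsupp.single (Sum.inl (γ, n + 1)) 1) else 0) := by
  rw [co_dx]
  have step1 : ∀ v ∈ m.support,
      (match v with
        | Sum.inl (α, i + 1) =>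
            co (pd (Sum.inl (α, i)) f) (m - Finsupp.single (Sum.inl (α, i + 1)) 1)
        | _ => (0 : ℂ)) =
      ∑ γ : Fin N, ∑ n ∈ s, (if v = Sum.inl (γ, n + 1) then
        (if Finsupp.single (Sum.inl (γ, n + 1)) 1 ≤ m then
          co (pd (Sum.inl (γ, n)) f) (m - Finsupp.single (Sum.inl (γ, n + 1)) 1) else 0)
        else 0) := by
    intro v hv
    rcases v with ⟨β, _ | j⟩ | ⟨⟩
    · rw [Finset.sum_eq_zero]
      intro γ _
      rw [Finset.sum_eq_zero]
      intro n _
      rw [if_neg]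
      simp
    · -- v = inl (β, j+1)
      rw [Finset.sum_eq_single β, Finset.sum_eq_single j]
      · rw [if_pos rfl, if_pos (single_le_iff_mem.mpr hv)]
      · intro n _ hn
        rw [if_neg]
        intro hc
        injection hc with hc'
        have h2 : j + 1 = n + 1 := congrArg Prod.snd hc'
        exact hn (by omega)
      · intro hj
        exact absurd (hs β j hv) hj
      · intro γ _ hγ
        rw [Finset.sum_eq_zero]
        intro n _
        rw [if_neg]
        intro hc
        injection hc with hc'
        have h2 : β = γ := congrArg Prod.fst hc'
        exact hγ h2.symm
      · intro hβ
        exact absurd (Finset.mem_univ β) hβ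
    · rw [Finset.sum_eq_zero]
      intro γ _
      rw [Finset.sum_eq_zero]
      intro n _
      rw [if_neg]
      simp
  rw [Finset.sum_congr rfl step1, Finset.sum_comm]
  refine Finset.sum_congr rfl fun γ _ => ?_
  rw [Finset.sum_comm]
  refine Finset.sum_congr rfl fun n _ => ?_
  rw [Finset.sum_ite_eq' m.support]
  by_cases hmem : Sum.inl (γ, n + 1) ∈ m.support
  · rw [if_pos hmem]
  · rw [if_neg hmem, if_neg]
    intro hle
    exact hmem (single_le_iff_mem.mp hle)

/-- Part A: the bracket with the translation Hamiltonian is `∂_x`. -/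
lemma pbK_eq_dx (K : Fin N → Fin N → ℕ → DP N) (hbar : LF N)
    (htr : ∀ α : Fin N, Kap K α (fun μ => vdQ μ hbar) = uv α 1) (f : DP N) :
    pbK K f hbar = dx f := by
  apply MvPowerSeries.ext; intro m
  show co (pbK K f hbar) m = co (dx f) m
  have lhs : co (pbK K f hbar) m = ∑ γ : Fin N, ∑ᶠ n : ℕ,
      co (pd (Sum.inl (γ, n)) f * dx^[n] (Kap K γ fun μ => vdQ μ hbar)) m := rfl
  rw [lhs]
  simp only [htr, dx_iter_uv1]
  set s : Finset ℕ := m.support.image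
    (fun v => match v with | Sum.inl (_, i) => i - 1 | _ => 0) with hsdef
  have hs : ∀ (γ : Fin N) (n : ℕ), Sum.inl (γ, n + 1) ∈ m.support → n ∈ s := by
    intro γ n hmem
    rw [hsdef, Finset.mem_image]
    exact ⟨Sum.inl (γ, n + 1), hmem, rfl⟩
  rw [co_dx_eq_sum f m s hs]
  refine Finset.sum_congr rfl fun γ _ => ?_
  have hsupp : ∀ n : ℕ, co (pd (Sum.inl (γ, n)) f * uv γ (n + 1)) m =
      (if Finsupp.single (Sum.inl (γ, n + 1)) 1 ≤ m then
        co (pd (Sum.inl (γ, n)) f) (m - Finsupp.single (Sum.inl (γ, n + 1)) 1) else 0) := by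
    intro n
    rw [uv, co_mul_X]
  rw [finsum_congr hsupp]
  apply finsum_eq_finset_sum_of_support_subset
  intro n hn
  simp only [Function.mem_support] at hn
  by_cases hle : Finsupp.single (Sum.inl (γ, n + 1)) 1 ≤ m
  · exact Finset.mem_coe.mpr (hs γ n (single_le_iff_mem.mp hle))
  · exact absurd (if_neg hle) hn

end DP
namespace DP

variable {N : ℕ}

lemma pd_normal (c : Fin N → ℂ) (γ : Fin N) (n : ℕ) :
    pd (Sum.inl (γ, n)) (∑ μ : Fin N, c μ • uv μ 0) =
      if n = 0 then c γ • (1 : DP N) else 0 := by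
  apply MvPowerSeries.ext; intro m
  show co _ m = co _ m
  rw [co_pd, co_sum]
  simp only [co_smul, co_uv]
  rcases n with _ | k
  · by_cases hm0 : m = 0
    · subst hm0
      rw [if_pos rfl, co_smul, zero_add]
      have h1 : ∀ b : Fin N, b ∈ Finset.univ → b ≠ γ →
          c b * (if (Finsupp.single (Sum.inl (γ, 0)) 1 : DVar N →₀ ℕ)
            = Finsupp.single (Sum.inl (b, 0)) 1 then (1:ℂ) else 0) = 0 := by
        intro b _ hb
        rw [if_neg, mul_zero]
        intro hc
        have := Finsupp.single_left_injective (one_ne_zero (α := ℕ)) hc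
        injection this with h'
        exact hb (congrArg Prod.fst h').symm
      rw [Finset.sum_eq_single γ h1 (fun hγ => absurd (Finset.mem_univ γ) hγ),
        if_pos rfl, mul_one]
      have : co (1 : DP N) 0 = 1 := by
        rw [co, MvPowerSeries.coeff_zero_eq_constantCoeff, map_one]
      rw [this, mul_one]
      simp
    · rw [if_pos rfl, co_smul]
      have hone : co (1 : DP N) m = 0 := by
        rw [co, MvPowerSeries.coeff_one, if_neg hm0]
      rw [hone, mul_zero, Finset.sum_eq_zero, mul_zero]
      intro b _
      rw [if_neg, mul_zero]
      intro hc
      -- m + e_{γ,0} = e_{b,0} forces m = 0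
      have h1 := DFunLike.congr_fun hc (Sum.inl (γ, 0))
      simp only [Finsupp.add_apply, Finsupp.single_apply, if_pos rfl, if_true] at h1
      have hbγ : (Sum.inl (b, 0) : DVar N) = Sum.inl (γ, 0) := by
        by_contra hne
        rw [if_neg hne] at h1
        omega
      rw [hbγ] at hc
      exact hm0 (add_right_cancel (by rw [zero_add]; exact hc : m + _ = 0 + _))
  · rw [if_neg (Nat.succ_ne_zero k)]
    have hz : co (0 : DP N) m = 0 := map_zero (MvPowerSeries.coeff (R := ℂ) m)
    rw [hz, Finset.sum_eq_zero, mul_zero]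
    intro b _
    rw [if_neg, mul_zero]
    intro hc
    have h1 := DFunLike.congr_fun hc (Sum.inl (γ, k + 1))
    simp only [Finsupp.add_apply, Finsupp.single_apply, if_pos rfl, if_true] at h1
    have hne : (Sum.inl (b, 0) : DVar N) ≠ Sum.inl (γ, k + 1) := by simp
    rw [if_neg hne] at h1
    omega

/-- Part B: bracket of the normal coordinate with any local functional. -/
lemma pbK_normal (K : Fin N → Fin N → ℕ → DP N) (c : Fin N → ℂ) (hbar : LF N) :
    pbK K (∑ μ : Fin N, c μ • uv μ 0) hbar
      = ∑ μ : Fin N, c μ • Kap K μ (fun ν => vdQ ν hbar) := by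
  apply MvPowerSeries.ext; intro m
  show co _ m = co _ m
  have lhs : co (pbK K (∑ μ : Fin N, c μ • uv μ 0) hbar) m = ∑ γ : Fin N, ∑ᶠ n : ℕ,
      co (pd (Sum.inl (γ, n)) (∑ μ : Fin N, c μ • uv μ 0)
        * dx^[n] (Kap K γ fun μ => vdQ μ hbar)) m := rfl
  rw [lhs, co_sum]
  refine Finset.sum_congr rfl fun γ _ => ?_
  rw [finsum_eq_single _ 0]
  · rw [pd_normal, if_pos rfl, Function.iterate_zero_apply, smul_mul_assoc, one_mul,
      co_smul]
  · intro n hn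
    rw [pd_normal, if_neg hn, zero_mul]
    exact map_zero (MvPowerSeries.coeff (R := ℂ) m)

end DP
namespace DP

variable {N : ℕ}

/-- The jet index of a variable. -/
def ind : DVar N → ℕ
  | Sum.inl (_, i) => i
  | Sum.inr _ => 0

/-- Indicator of being a `u`-variable. -/
def dco : DVar N → ℕ
  | Sum.inl _ => 1
  | Sum.inr _ => 0

/-- Weighted count of a monomial. -/
noncomputable def wsum (c : DVar N → ℕ) (m : DVar N →₀ ℕ) : ℕ :=
  m.sum fun v k => c v * k

lemma wsum_add (c : DVar N → ℕ) (a b : DVar N →₀ ℕ) :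
    wsum c (a + b) = wsum c a + wsum c b :=
  Finsupp.sum_add_index' (fun v => by simp) (fun v k1 k2 => Nat.mul_add _ _ _)

lemma wsum_single (c : DVar N → ℕ) (v : DVar N) (k : ℕ) :
    wsum c (Finsupp.single v k) = c v * k :=
  Finsupp.sum_single_index (by simp)

lemma le_wsum (c : DVar N → ℕ) (m : DVar N →₀ ℕ) (v : DVar N) (hv : v ∈ m.support) :
    c v * m v ≤ wsum c m := by
  have h : wsum c m = ∑ x ∈ m.support, c x * m x := rfl
  rw [h]
  exact Finset.single_le_sum (f := fun x => c x * m x) (fun x _ => Nat.zero_le _) hv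

/-- The `u`-degree of a monomial. -/
noncomputable def udegN (m : DVar N →₀ ℕ) : ℕ := wsum dco m

/-- The total jet weight of a monomial. -/
noncomputable def uwt (m : DVar N →₀ ℕ) : ℕ := wsum ind m

/-- The top jet index present in a monomial. -/
noncomputable def itop (m : DVar N →₀ ℕ) : ℕ := m.support.sup ind

lemma itop_le_uwt (m : DVar N →₀ ℕ) : itop m ≤ uwt m := by
  apply Finset.sup_le
  intro v hv
  have h1 : m v ≠ 0 := Finsupp.mem_support_iff.mp hv
  calc ind v = ind v * 1 := (mul_one _).symm
    _ ≤ ind v * m v := Nat.mul_le_mul_left _ (by omega)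
    _ ≤ wsum ind m := le_wsum ind m v hv

/-- The kernel of `∂_x` consists of series without `u`-variables. -/
lemma ker_dx (g : DP N) (hg : dx g = 0) :
    ∀ m : DVar N →₀ ℕ, udegN m ≠ 0 → co g m = 0 := by
  suffices H : ∀ (k : ℕ) (m : DVar N →₀ ℕ), uwt m - itop m = k → udegN m ≠ 0 → co g m = 0 by
    exact fun m hm => H _ m rfl hm
  intro k
  induction k using Nat.strong_induction_on with
  | _ k IH =>
  intro m hk hd
  -- find a u-variable with maximal index
  obtain ⟨α, i, hmem, hieq⟩ : ∃ (α : Fin N) (i : ℕ),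
      Sum.inl (α, i) ∈ m.support ∧ itop m = i := by
    have hd' : (∑ v ∈ m.support, dco v * m v) ≠ 0 := hd
    obtain ⟨w, hw, hwne⟩ := Finset.exists_ne_zero_of_sum_ne_zero hd'
    obtain ⟨β, j⟩ | ⟨⟩ := w
    · obtain ⟨v0, hv0, hsup⟩ := Finset.exists_mem_eq_sup m.support ⟨_, hw⟩ ind
      obtain ⟨β', j'⟩ | ⟨⟩ := v0
      · exact ⟨β', j', hv0, hsup⟩
      · have hle : ind (Sum.inl (β, j) : DVar N) ≤ itop m := Finset.le_sup hw
        have hz : itop m = 0 := hsup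
        have hj : j = 0 := by
          have : j ≤ itop m := hle
          omega
        exact ⟨β, j, hw, by rw [hz, hj]⟩
    · simp [dco] at hwne
  have hmne : m (Sum.inl (α, i)) ≠ 0 := Finsupp.mem_support_iff.mp hmem
  set e1 : DVar N →₀ ℕ := Finsupp.single (Sum.inl (α, i)) 1 with he1
  set e2 : DVar N →₀ ℕ := Finsupp.single (Sum.inl (α, i + 1)) 1 with he2
  have hle1 : e1 ≤ m := Finsupp.single_le_iff.mpr (by omega)
  set m' : DVar N →₀ ℕ := (m - e1) + e2 with hm'
  have hm1 : (m - e1) + e1 = m := tsub_add_cancel_of_le hle1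
  have hm'top : m' (Sum.inl (α, i + 1)) = (m - e1) (Sum.inl (α, i + 1)) + 1 := by
    rw [hm', Finsupp.add_apply, he2, Finsupp.single_apply, if_pos rfl]
  have hv0mem : Sum.inl (α, i + 1) ∈ m'.support := by
    rw [Finsupp.mem_support_iff]
    omega
  have h0 : co (dx g) m' = 0 := by rw [hg]; exact map_zero (MvPowerSeries.coeff (R := ℂ) m')
  rw [co_dx] at h0
  -- weights of m'
  have h1 : m' + e1 = m + e2 := by rw [hm', add_right_comm, hm1]
  have huwt' : uwt m' + i = uwt m + (i + 1) := by
    have h2 := congrArg (wsum ind) h1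
    simp only [he1, he2, wsum_add, wsum_single, ind, mul_one] at h2
    show wsum ind m' + i = wsum ind m + (i + 1)
    omega
  have hudeg' : udegN m' = udegN m := by
    have h2 := congrArg (wsum dco) h1
    simp only [he1, he2, wsum_add, wsum_single, dco, mul_one] at h2
    show wsum dco m' = wsum dco m
    omega
  rw [Finset.sum_eq_single_of_mem (Sum.inl (α, i + 1)) hv0mem ?hother] at h0
  · -- main term
    have h0' : co (pd (Sum.inl (α, i)) g) (m' - e2) = 0 := h0
    have hm'e2 : m' - e2 = m - e1 := by rw [hm']; exact add_tsub_cancel_right ..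
    rw [hm'e2, co_pd] at h0'
    rw [show (m - e1) + Finsupp.single (Sum.inl (α, i)) 1 = m from hm1] at h0'
    have hne0 : (((m - e1) (Sum.inl (α, i)) : ℂ) + 1) ≠ 0 := Nat.cast_add_one_ne_zero _
    exact (mul_eq_zero.mp h0').resolve_left hne0
  · -- other terms
    intro v hv hne
    rcases v with ⟨β, _ | j⟩ | ⟨⟩
    · rfl
    swap
    · rfl
    show co (pd (Sum.inl (β, j)) g) (m' - Finsupp.single (Sum.inl (β, j + 1)) 1) = 0
    set eb2 : DVar N →₀ ℕ := Finsupp.single (Sum.inl (β, j + 1)) 1 with heb2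
    set eb1 : DVar N →₀ ℕ := Finsupp.single (Sum.inl (β, j)) 1 with heb1
    rw [co_pd]
    set m'' : DVar N →₀ ℕ := (m' - eb2) + eb1 with hm''
    have hvne : m' (Sum.inl (β, j + 1)) ≠ 0 := Finsupp.mem_support_iff.mp hv
    have hvle : eb2 ≤ m' := Finsupp.single_le_iff.mpr (by omega)
    suffices hz : co g m'' = 0 by rw [hz, mul_zero]
    -- weights of m''
    have hkey : m'' + eb2 = m' + eb1 := by
      rw [hm'', add_right_comm, tsub_add_cancel_of_le hvle]
    have huwt'' : uwt m'' + (j + 1) = uwt m' + j := by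
      have h2 := congrArg (wsum ind) hkey
      simp only [heb1, heb2, wsum_add, wsum_single, ind, mul_one] at h2
      show wsum ind m'' + (j + 1) = wsum ind m' + j
      omega
    have hudeg'' : udegN m'' = udegN m' := by
      have h2 := congrArg (wsum dco) hkey
      simp only [heb1, heb2, wsum_add, wsum_single, dco, mul_one] at h2
      show wsum dco m'' = wsum dco m'
      omega
    -- the top variable survives in m''
    have hnb : (Sum.inl (β, j + 1) : DVar N) ≠ Sum.inl (α, i + 1) := hne
    have hm''top : m'' (Sum.inl (α, i + 1)) ≠ 0 := by
      have h1 : m'' (Sum.inl (α, i + 1)) =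
          (m' (Sum.inl (α, i + 1)) - eb2 (Sum.inl (α, i + 1))) + eb1 (Sum.inl (α, i + 1)) := by
        rw [hm'', Finsupp.add_apply, Finsupp.tsub_apply]
      have h2 : eb2 (Sum.inl (α, i + 1)) = 0 := by
        rw [heb2, Finsupp.single_apply, if_neg hnb]
      omega
    have hitop'' : i + 1 ≤ itop m'' := by
      have : ind (Sum.inl (α, i + 1) : DVar N) ≤ itop m'' :=
        Finset.le_sup (Finsupp.mem_support_iff.mpr hm''top)
      exact this
    have hiw : itop m'' ≤ uwt m'' := itop_le_uwt m''
    exact IH (uwt m'' - itop m'') (by omega) m'' rfl (by omega)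

end DP
namespace DP

variable {N : ℕ}

lemma eq_single_eps {m : DVar N →₀ ℕ} (hm : udegN m = 0) :
    m = Finsupp.single (Sum.inr ()) (m (Sum.inr ())) := by
  have h0 : wsum dco m = 0 := hm
  ext x
  rcases x with ⟨β, j⟩ | ⟨⟩
  · rw [Finsupp.single_apply, if_neg (by simp)]
    by_contra hne
    have hmem : Sum.inl (β, j) ∈ m.support := Finsupp.mem_support_iff.mpr hne
    have hle := le_wsum dco m _ hmem
    have hdco : dco (Sum.inl (β, j) : DVar N) = 1 := rfl
    rw [hdco, one_mul] at hle
    omega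
  · rw [Finsupp.single_apply, if_pos rfl]

end DP

open DP in
/-- uniqueness of a tau-structure in normal coordinates.
If the hamiltonian operator satisfies `K^{αβ} = η^{αβ}∂_x + O(ε)` and the
tau-structure `h` (with `h β q = h_{β,q−1}`) is in normal coordinates, i.e.
`h_{α,−1} = η_{αμ}u^μ` (lower indices denoting the inverse matrix), and is
normalized by `h_{β,q}|_{u^*_*=0} = 0`, then
`∂_x h_{α,p−1} = η_{1μ} K^{μν} δh̄_{α,p}/δu^ν` for all `p ≥ 0`, and
consequently the tau-symmetric densities are uniquely determined by the
Hamiltonians and the operator `K`. -/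
theorem statement6 (N : ℕ) [NeZero N] (η : Matrix (Fin N) (Fin N) ℂ)
    (hsym : η.IsSymm) (hnd : IsUnit η.det)
    (K : Fin N → Fin N → ℕ → DP N) (H : Fin N → ℕ → LF N)
    (h : Fin N → ℕ → DP N)
    (hHier : IsHierarchy K H) (hTau : IsTauStructure K H h)
    (hKeps : ∀ (α β : Fin N) (j : ℕ) (m : DVar N →₀ ℕ), m (Sum.inr ()) = 0 →
      co (K α β j) m = if j = 1 ∧ m = 0 then η α β else 0)
    (hNormal : ∀ α, h α 0 = ∑ μ : Fin N, η⁻¹ α μ • uv μ 0)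
    (hVan : ∀ β q, VanishAtU0 (h β q)) :
    (∀ (α : Fin N) (p : ℕ),
      dx (h α p) = ∑ μ : Fin N, η⁻¹ 0 μ • Kap K μ (fun ν => vdQ ν (H α p))) ∧
    (∀ h₂ : Fin N → ℕ → DP N, IsTauStructure K H h₂ →
      (∀ α, h₂ α 0 = ∑ μ : Fin N, η⁻¹ α μ • uv μ 0) →
      (∀ β q, VanishAtU0 (h₂ β q)) →
      ∀ β q, h₂ β q = h β q) := by
  have part1 : ∀ (h' : Fin N → ℕ → DP N), IsTauStructure K H h' →
      (∀ α, h' α 0 = ∑ μ : Fin N, η⁻¹ α μ • uv μ 0) →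
      ∀ (α : Fin N) (p : ℕ),
        dx (h' α p) = ∑ μ : Fin N, η⁻¹ 0 μ • Kap K μ (fun ν => vdQ ν (H α p)) := by
    intro h' ht hn α p
    rw [← pbK_eq_dx K (H 0 0) hHier.transl (h' α p), ht.tausym α 0 p 0, hn 0, pbK_normal]
  refine ⟨part1 h hTau hNormal, ?_⟩
  intro h₂ hTau₂ hNormal₂ hVan₂ β q
  have hdx0 : dx (h₂ β q - h β q) = 0 := by
    rw [dx_sub, part1 h₂ hTau₂ hNormal₂ β q, part1 h hTau hNormal β q, sub_self]
  have hker := ker_dx _ hdx0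
  have hzero : h₂ β q - h β q = 0 := by
    apply MvPowerSeries.ext
    intro m
    have hR : MvPowerSeries.coeff (R := ℂ) m (0 : DP N) = 0 := map_zero _
    rw [hR]
    by_cases hm : udegN m = 0
    · have hm0 := eq_single_eps hm
      show co (h₂ β q - h β q) m = 0
      rw [co_sub, hm0, hVan₂ β q, hVan β q, sub_self]
    · exact hker m hm
  exact sub_eq_zero.mp hzero
end
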